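/- (Lukács, odd case) Let a < b be real numbers and let q ∈ ℝ[y] be a univariate polynomial of odd degree d that is nonnegative on the interval [a,b]. Then there exist polynomials σ₀, σ₁ ∈ ℝ[y], each a sum of squares of polynomials, with deg σ₀ ≤ d − 1 and deg σ₁ ≤ d − 1, such that q(y) = σ₀(y)·(y − a) + σ₁(y)·(b − y) for all y ∈ ℝ. -/

import Mathlib

open Polynomial Set

namespace LukacsAux

lemma isSumSq_mul_self_mul {R : Type*} [CommSemiring R] (a : R) {y : R} (hy : IsSumSq y) :
    IsSumSq (a * a * y) := by
  induction hy with
  | zero => simpa using IsSumSq.zero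
  | @sq_add b T hT ih =>
      have h : a * a * (b * b + T) = (a * b) * (a * b) + a * a * T := by ring
      rw [h]; exact IsSumSq.sq_add _ ih

lemma isSumSq_mul {R : Type*} [CommSemiring R] {x y : R} (hx : IsSumSq x) (hy : IsSumSq y) :
    IsSumSq (x * y) := by
  induction hx with
  | zero => simpa using IsSumSq.zero
  | @sq_add a S hS ih =>
      have h : (a * a + S) * y = a * a * y + S * y := by ring
      rw [h]; exact (isSumSq_mul_self_mul a hy).add ih

lemma isSumSq_C {c : ℝ} (hc : 0 ≤ c) : IsSumSq (C c) := by
  have h : C c = C (Real.sqrt c) * C (Real.sqrt c) + 0 := by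
    rw [← C_mul, Real.mul_self_sqrt hc, add_zero]
  rw [h]; exact IsSumSq.sq_add _ IsSumSq.zero

lemma isSumSq_sq {R : Type*} [CommSemiring R] (p : R) : IsSumSq (p ^ 2) := by
  have h : p ^ 2 = p * p + 0 := by ring
  rw [h]; exact IsSumSq.sq_add _ IsSumSq.zero

/-- Odd-type representation with degree bound `n - 1` (phrased additively). -/
def OddRep (a b : ℝ) (n : ℕ) (q : Polynomial ℝ) : Prop :=
  ∃ σ₀ σ₁ : Polynomial ℝ, IsSumSq σ₀ ∧ IsSumSq σ₁ ∧
    (σ₀ = 0 ∨ σ₀.natDegree + 1 ≤ n) ∧ (σ₁ = 0 ∨ σ₁.natDegree + 1 ≤ n) ∧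
    ∀ y : ℝ, q.eval y = σ₀.eval y * (y - a) + σ₁.eval y * (b - y)

/-- Even-type representation with degree bounds `n`, `n - 2`. -/
def EvenRep (a b : ℝ) (n : ℕ) (q : Polynomial ℝ) : Prop :=
  ∃ σ τ : Polynomial ℝ, IsSumSq σ ∧ IsSumSq τ ∧
    σ.natDegree ≤ n ∧ (τ = 0 ∨ τ.natDegree + 2 ≤ n) ∧
    ∀ y : ℝ, q.eval y = σ.eval y + τ.eval y * (y - a) * (b - y)

def Good (a b : ℝ) (n : ℕ) (q : Polynomial ℝ) : Prop :=
  (Odd n → OddRep a b n q) ∧ (Even n → EvenRep a b n q)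

lemma good_zero (a b : ℝ) (n : ℕ) : Good a b n 0 := by
  constructor
  · intro _
    exact ⟨0, 0, IsSumSq.zero, IsSumSq.zero, Or.inl rfl, Or.inl rfl, fun y => by simp⟩
  · intro _
    exact ⟨0, 0, IsSumSq.zero, IsSumSq.zero, by simp, Or.inl rfl, fun y => by simp⟩

lemma good_congr {a b : ℝ} {n : ℕ} {p q : Polynomial ℝ}
    (h : ∀ y : ℝ, p.eval y = q.eval y) (hp : Good a b n p) : Good a b n q := by
  constructor
  · intro hodd
    obtain ⟨σ₀, σ₁, s0, s1, d0, d1, heq⟩ := hp.1 hodd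
    exact ⟨σ₀, σ₁, s0, s1, d0, d1, fun y => (h y) ▸ heq y⟩
  · intro heven
    obtain ⟨σ, τ, s0, s1, d0, d1, heq⟩ := hp.2 heven
    exact ⟨σ, τ, s0, s1, d0, d1, fun y => (h y) ▸ heq y⟩

lemma good_add_const {a b : ℝ} (hab : a < b) {n : ℕ} {q : Polynomial ℝ} {c : ℝ}
    (hc : 0 ≤ c) (h : Good a b n q) : Good a b n (q + C c) := by
  have hba : b - a ≠ 0 := sub_ne_zero.mpr hab.ne'
  have hba' : (0:ℝ) ≤ c / (b - a) := div_nonneg hc (by linarith)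
  constructor
  · intro hodd
    have hn : 1 ≤ n := hodd.pos
    obtain ⟨σ₀, σ₁, s0, s1, d0, d1, heq⟩ := h.1 hodd
    refine ⟨σ₀ + C (c / (b - a)), σ₁ + C (c / (b - a)),
      s0.add (isSumSq_C hba'), s1.add (isSumSq_C hba'), ?_, ?_, ?_⟩
    · right
      have h1 := natDegree_add_le σ₀ (C (c / (b - a)))
      have h2 : σ₀.natDegree + 1 ≤ n := by
        rcases d0 with h0 | h0
        · rw [h0]; simpa using hn
        · exact h0
      simp only [natDegree_C] at h1; omega
    · right
      have h1 := natDegree_add_le σ₁ (C (c / (b - a)))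
      have h2 : σ₁.natDegree + 1 ≤ n := by
        rcases d1 with h0 | h0
        · rw [h0]; simpa using hn
        · exact h0
      simp only [natDegree_C] at h1; omega
    · intro y
      simp only [eval_add, eval_C]
      rw [heq y]
      field_simp
      ring
  · intro heven
    obtain ⟨σ, τ, s0, s1, d0, d1, heq⟩ := h.2 heven
    refine ⟨σ + C c, τ, s0.add (isSumSq_C hc), s1, ?_, d1, ?_⟩
    · have := natDegree_add_le σ (C c)
      simp only [natDegree_C] at this; omega
    · intro y
      simp only [eval_add, eval_C]
      rw [heq y]; ring

lemma odd_of_odd_add_two {m : ℕ} (h : Odd (m + 2)) : Odd m := by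
  rcases h with ⟨k, hk⟩; exact ⟨k - 1, by omega⟩

lemma even_of_even_add_two {m : ℕ} (h : Even (m + 2)) : Even m := by
  rcases h with ⟨k, hk⟩; exact ⟨k - 1, by omega⟩

lemma natDegree_sq_mul_le (r : ℝ) (p : Polynomial ℝ) :
    ((X - C r) ^ 2 * p).natDegree ≤ 2 + p.natDegree := by
  refine le_trans (natDegree_mul_le) ?_
  have : ((X - C r : Polynomial ℝ) ^ 2).natDegree ≤ 2 := by
    refine le_trans (natDegree_pow_le) ?_
    simp [natDegree_X_sub_C]
  omega

lemma natDegree_sq_mul_le' (r : ℝ) (p : Polynomial ℝ) :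
    ((C r - X) ^ 2 * p).natDegree ≤ 2 + p.natDegree := by
  refine le_trans (natDegree_mul_le) ?_
  have h : ((C r - X : Polynomial ℝ) ^ 2).natDegree ≤ 2 := by
    refine le_trans (natDegree_pow_le) ?_
    have : (C r - X : Polynomial ℝ) = -(X - C r) := by ring
    rw [this, natDegree_neg, natDegree_X_sub_C]
  omega

/-- Lift: multiply a degree-`m` representation by `(y - a)`. -/
lemma good_mul_left {a b : ℝ} {m : ℕ} {q : Polynomial ℝ}
    (h : Good a b m q) : Good a b (m + 1) ((X - C a) * q) := by
  constructor
  · intro hodd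
    have hm : Even m := Nat.not_odd_iff_even.mp (Nat.odd_add_one.mp hodd)
    obtain ⟨σ, τ, s0, s1, d0, d1, heq⟩ := h.2 hm
    refine ⟨σ, (X - C a) ^ 2 * τ, s0, isSumSq_mul (isSumSq_sq _) s1, Or.inr (by omega), ?_, ?_⟩
    · rcases d1 with h0 | h0
      · left; rw [h0, mul_zero]
      · right; have := natDegree_sq_mul_le a τ; omega
    · intro y
      simp only [eval_mul, eval_sub, eval_pow, eval_X, eval_C]
      rw [heq y]; ring
  · intro heven
    have hm : Odd m := by
      rcases heven with ⟨k, hk⟩; exact ⟨k - 1, by omega⟩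
    obtain ⟨σ₀, σ₁, s0, s1, d0, d1, heq⟩ := h.1 hm
    refine ⟨(X - C a) ^ 2 * σ₀, σ₁, isSumSq_mul (isSumSq_sq _) s0, s1, ?_, ?_, ?_⟩
    · rcases d0 with h0 | h0
      · rw [h0, mul_zero]; simp
      · have := natDegree_sq_mul_le a σ₀; omega
    · rcases d1 with h0 | h0
      · exact Or.inl h0
      · exact Or.inr (by omega)
    · intro y
      simp only [eval_mul, eval_sub, eval_pow, eval_X, eval_C]
      rw [heq y]; ring

/-- Lift: multiply a degree-`m` representation by `(b - y)`. -/
lemma good_mul_right {a b : ℝ} {m : ℕ} {q : Polynomial ℝ}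
    (h : Good a b m q) : Good a b (m + 1) ((C b - X) * q) := by
  constructor
  · intro hodd
    have hm : Even m := Nat.not_odd_iff_even.mp (Nat.odd_add_one.mp hodd)
    obtain ⟨σ, τ, s0, s1, d0, d1, heq⟩ := h.2 hm
    refine ⟨(C b - X) ^ 2 * τ, σ, isSumSq_mul (isSumSq_sq _) s1, s0, ?_, Or.inr (by omega), ?_⟩
    · rcases d1 with h0 | h0
      · left; rw [h0, mul_zero]
      · right; have := natDegree_sq_mul_le' b τ; omega
    · intro y
      simp only [eval_mul, eval_sub, eval_pow, eval_X, eval_C]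
      rw [heq y]; ring
  · intro heven
    have hm : Odd m := by
      rcases heven with ⟨k, hk⟩; exact ⟨k - 1, by omega⟩
    obtain ⟨σ₀, σ₁, s0, s1, d0, d1, heq⟩ := h.1 hm
    refine ⟨(C b - X) ^ 2 * σ₁, σ₀, isSumSq_mul (isSumSq_sq _) s1, s0, ?_, ?_, ?_⟩
    · rcases d1 with h0 | h0
      · rw [h0, mul_zero]; simp
      · have := natDegree_sq_mul_le' b σ₁; omega
    · rcases d0 with h0 | h0
      · exact Or.inl h0
      · exact Or.inr (by omega)
    · intro y
      simp only [eval_mul, eval_sub, eval_pow, eval_X, eval_C]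
      rw [heq y]; ring

/-- Lift: multiply a degree-`m` representation by a square `(y - r)²`. -/
lemma good_mul_sq {a b : ℝ} {m : ℕ} {q : Polynomial ℝ} (r : ℝ)
    (h : Good a b m q) : Good a b (m + 2) ((X - C r) ^ 2 * q) := by
  constructor
  · intro hodd
    obtain ⟨σ₀, σ₁, s0, s1, d0, d1, heq⟩ := h.1 (odd_of_odd_add_two hodd)
    refine ⟨(X - C r) ^ 2 * σ₀, (X - C r) ^ 2 * σ₁,
      isSumSq_mul (isSumSq_sq _) s0, isSumSq_mul (isSumSq_sq _) s1, ?_, ?_, ?_⟩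
    · rcases d0 with h0 | h0
      · left; rw [h0, mul_zero]
      · right; have := natDegree_sq_mul_le r σ₀; omega
    · rcases d1 with h0 | h0
      · left; rw [h0, mul_zero]
      · right; have := natDegree_sq_mul_le r σ₁; omega
    · intro y
      simp only [eval_mul, eval_sub, eval_pow, eval_X, eval_C]
      rw [heq y]; ring
  · intro heven
    obtain ⟨σ, τ, s0, s1, d0, d1, heq⟩ := h.2 (even_of_even_add_two heven)
    refine ⟨(X - C r) ^ 2 * σ, (X - C r) ^ 2 * τ,
      isSumSq_mul (isSumSq_sq _) s0, isSumSq_mul (isSumSq_sq _) s1, ?_, ?_, ?_⟩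
    · have := natDegree_sq_mul_le r σ; omega
    · rcases d1 with h0 | h0
      · left; rw [h0, mul_zero]
      · right; have := natDegree_sq_mul_le r τ; omega
    · intro y
      simp only [eval_mul, eval_sub, eval_pow, eval_X, eval_C]
      rw [heq y]; ring

lemma nonneg_on_closure {q : Polynomial ℝ} {s : Set ℝ}
    (h : ∀ y ∈ s, 0 ≤ q.eval y) : ∀ y ∈ closure s, 0 ≤ q.eval y := by
  have hcl : IsClosed {y : ℝ | 0 ≤ q.eval y} :=
    isClosed_le continuous_const q.continuous
  exact fun y hy => closure_minimal h hcl hy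

lemma icc_subset_closure_diff {a b z : ℝ} (hab : a < b) (hz : z ∈ Icc a b) :
    Icc a b ⊆ closure (Icc a b \ {z}) := by
  intro w hw
  by_cases hwz : w = z
  · rcases lt_or_eq_of_le hw.2 with h | h
    · have hsub : Ioo w b ⊆ Icc a b \ {z} := by
        intro y hy
        refine ⟨⟨le_trans hw.1 hy.1.le, hy.2.le⟩, ?_⟩
        simp only [mem_singleton_iff]
        intro hyz
        rw [hyz, ← hwz] at hy
        exact absurd hy.1 (lt_irrefl _)
      have hmem : w ∈ closure (Ioo w b) := by
        rw [closure_Ioo h.ne]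
        exact ⟨le_refl _, h.le⟩
      exact closure_mono hsub hmem
    · have haw : a < w := by rw [h]; exact hab
      have hsub : Ioo a w ⊆ Icc a b \ {z} := by
        intro y hy
        refine ⟨⟨hy.1.le, le_trans hy.2.le hw.2⟩, ?_⟩
        simp only [mem_singleton_iff]
        intro hyz
        rw [hyz, ← hwz] at hy
        exact absurd hy.2 (lt_irrefl _)
      have hmem : w ∈ closure (Ioo a w) := by
        rw [closure_Ioo haw.ne]
        exact ⟨haw.le, le_refl _⟩
      exact closure_mono hsub hmem
  · exact subset_closure ⟨hw, hwz⟩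

/-- Main induction. -/
lemma good_of {a b : ℝ} (hab : a < b) :
    ∀ n : ℕ, ∀ q : Polynomial ℝ, q.natDegree ≤ n →
      (∀ y ∈ Icc a b, 0 ≤ q.eval y) → Good a b n q := by
  intro n
  induction n using Nat.strong_induction_on with
  | _ n IH =>
    intro q hdeg hnn
    rcases eq_or_ne q 0 with rfl | hq0
    · exact good_zero a b n
    match n, hdeg, IH with
    | 0, hdeg, IH =>
      have hq : q = C (q.coeff 0) := eq_C_of_natDegree_le_zero hdeg
      have hc : 0 ≤ q.coeff 0 := by
        have := hnn a ⟨le_refl a, hab.le⟩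
        rwa [hq, eval_C] at this
      constructor
      · intro hodd; exact absurd hodd (by simp)
      · intro _
        exact ⟨q, 0, hq ▸ isSumSq_C hc, IsSumSq.zero, hdeg, Or.inl rfl,
          fun y => by simp⟩
    | (k+1 : ℕ), hdeg, IH =>
      -- find the minimum on [a,b]
      obtain ⟨y₀, hy₀, hminOn⟩ := isCompact_Icc.exists_isMinOn (nonempty_Icc.mpr hab.le)
        (q.continuous.continuousOn : ContinuousOn (fun y => q.eval y) (Icc a b))
      have hmin : ∀ y ∈ Icc a b, q.eval y₀ ≤ q.eval y := fun y hy => isMinOn_iff.mp hminOn y hy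
      set l : ℝ := q.eval y₀ with hl
      have hl0 : 0 ≤ l := hnn y₀ hy₀
      set q' : Polynomial ℝ := q - C l with hq'
      have hq'deg : q'.natDegree ≤ k + 1 := by
        refine le_trans (natDegree_sub_le _ _) ?_
        simp only [natDegree_C]
        omega
      have hq'nn : ∀ y ∈ Icc a b, 0 ≤ q'.eval y := by
        intro y hy
        simp only [hq', eval_sub, eval_C, sub_nonneg]
        exact hmin y hy
      have hroot : q'.eval y₀ = 0 := by simp [hq', hl]
      have hgood' : Good a b (k + 1) q' := by
        rcases eq_or_ne q' 0 with h0 | hq'0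
        · rw [h0]; exact good_zero a b (k+1)
        rcases eq_or_lt_of_le hy₀.1 with ha' | ha'
        · -- y₀ = a
          have hdvd : (X - C a) ∣ q' := dvd_iff_isRoot.mpr (by rw [ha']; exact hroot)
          obtain ⟨q₁, hq₁⟩ := hdvd
          have hq₁0 : q₁ ≠ 0 := by rintro rfl; simp at hq₁; exact hq'0 hq₁
          have hdd : q₁.natDegree ≤ k := by
            have := natDegree_mul (X_sub_C_ne_zero a) hq₁0
            rw [← hq₁, natDegree_X_sub_C] at this
            omega
          have hq₁nn : ∀ y ∈ Icc a b, 0 ≤ q₁.eval y := by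
            have h1 : ∀ y ∈ Ioc a b, 0 ≤ q₁.eval y := by
              intro y hy
              have h2 : 0 ≤ (y - a) * q₁.eval y := by
                have := hq'nn y ⟨hy.1.le, hy.2⟩
                rwa [hq₁, eval_mul, eval_sub, eval_X, eval_C] at this
              have h3 : 0 < y - a := by linarith [hy.1]
              nlinarith
            intro y hy
            refine nonneg_on_closure h1 y ?_
            rwa [closure_Ioc hab.ne]
          have := good_mul_left (a := a) (b := b) (IH k (by omega) q₁ hdd hq₁nn)
          exact good_congr (fun y => by rw [← hq₁]) this
        rcases eq_or_lt_of_le hy₀.2 with hb' | hb'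
        · -- y₀ = b
          have hdvd : (X - C b) ∣ q' := dvd_iff_isRoot.mpr (by rw [← hb']; exact hroot)
          obtain ⟨q₁, hq₁⟩ := hdvd
          have hq₂ : q' = (C b - X) * (-q₁) := by rw [hq₁]; ring
          have hq₁0 : (-q₁) ≠ 0 := by
            rintro h; rw [neg_eq_zero] at h; rw [h] at hq₁; simp at hq₁; exact hq'0 hq₁
          have hdd : (-q₁).natDegree ≤ k := by
            have h5 : (C b - X : Polynomial ℝ) ≠ 0 := by
              have : (C b - X : Polynomial ℝ) = -(X - C b) := by ring
              rw [this, neg_ne_zero]; exact X_sub_C_ne_zero b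
            have := natDegree_mul h5 hq₁0
            rw [← hq₂] at this
            have h6 : (C b - X : Polynomial ℝ).natDegree = 1 := by
              have h7 : (C b - X : Polynomial ℝ) = -(X - C b) := by ring
              rw [h7, natDegree_neg, natDegree_X_sub_C]
            omega
          have hq₁nn : ∀ y ∈ Icc a b, 0 ≤ (-q₁).eval y := by
            have h1 : ∀ y ∈ Ico a b, 0 ≤ (-q₁).eval y := by
              intro y hy
              have h2 : 0 ≤ (b - y) * (-q₁).eval y := by
                have := hq'nn y ⟨hy.1, hy.2.le⟩
                rwa [hq₂, eval_mul, eval_sub, eval_X, eval_C] at this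
              have h3 : 0 < b - y := by linarith [hy.2]
              nlinarith
            intro y hy
            refine nonneg_on_closure h1 y ?_
            rwa [closure_Ico hab.ne]
          have := good_mul_right (a := a) (b := b) (IH k (by omega) (-q₁) hdd hq₁nn)
          exact good_congr (fun y => by rw [← hq₂]) this
        · -- a < y₀ < b : interior double root
          have hlocal : IsLocalMin (fun y => q'.eval y) y₀ := by
            refine Filter.eventually_of_mem (Icc_mem_nhds ha' hb') ?_
            intro y hy
            simpa [hroot] using hq'nn y hy
          have hderiv : (derivative q').eval y₀ = 0 := by
            have := hlocal.deriv_eq_zero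
            rwa [Polynomial.deriv] at this
          have hdvd : (X - C y₀) ∣ q' := dvd_iff_isRoot.mpr hroot
          obtain ⟨q₁, hq₁⟩ := hdvd
          have hq₁root : q₁.eval y₀ = 0 := by
            have h1 : derivative q' = q₁ + (X - C y₀) * derivative q₁ := by
              rw [hq₁, derivative_mul, derivative_X_sub_C, one_mul]
            have h2 := hderiv
            rw [h1] at h2
            simpa using h2
          obtain ⟨q₂, hq₂⟩ := dvd_iff_isRoot.mpr hq₁root
          have hq'eq : q' = (X - C y₀) ^ 2 * q₂ := by rw [hq₁, hq₂]; ring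
          have hq₂0 : q₂ ≠ 0 := by
            rintro rfl; rw [mul_zero] at hq'eq; exact hq'0 hq'eq
          have hsqne : ((X - C y₀ : Polynomial ℝ) ^ 2) ≠ 0 := pow_ne_zero _ (X_sub_C_ne_zero y₀)
          have hdd : q₂.natDegree + 2 ≤ k + 1 := by
            have := natDegree_mul hsqne hq₂0
            rw [← hq'eq, natDegree_pow, natDegree_X_sub_C] at this
            omega
          have hq₂nn : ∀ y ∈ Icc a b, 0 ≤ q₂.eval y := by
            have h1 : ∀ y ∈ Icc a b \ {y₀}, 0 ≤ q₂.eval y := by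
              intro y hy
              have h2 : 0 ≤ (y - y₀) ^ 2 * q₂.eval y := by
                have := hq'nn y hy.1
                rwa [hq'eq, eval_mul, eval_pow, eval_sub, eval_X, eval_C] at this
              have h3 : 0 < (y - y₀) ^ 2 := by
                have : y - y₀ ≠ 0 := sub_ne_zero.mpr (by simpa using hy.2)
                positivity
              nlinarith
            intro y hy
            exact nonneg_on_closure h1 y (icc_subset_closure_diff hab hy₀ hy)
          have hgq₂ : Good a b (k - 1) q₂ := IH (k - 1) (by omega) q₂ (by omega) hq₂nn
          have := good_mul_sq (a := a) (b := b) y₀ hgq₂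
          have hk1 : k - 1 + 2 = k + 1 := by omega
          rw [hk1] at this
          exact good_congr (fun y => by rw [← hq'eq]) this
      -- add back the constant l
      have := good_add_const hab hl0 hgood'
      refine good_congr (fun y => ?_) this
      simp [hq']

end LukacsAux

/-- Lukács, odd case: if `q ∈ ℝ[y]` has odd degree `d` and is
nonnegative on `[a,b]` (`a < b`), then `q = σ₀·(y − a) + σ₁·(b − y)` with `σ₀, σ₁`
sums of squares, `deg σ₀ ≤ d − 1`, `deg σ₁ ≤ d − 1`. -/
theorem lukacs_odd (a b : ℝ) (hab : a < b) (d : ℕ) (hd : Odd d)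
    (q : Polynomial ℝ) (hdeg : q.natDegree = d)
    (hnonneg : ∀ y ∈ Set.Icc a b, 0 ≤ q.eval y) :
    ∃ σ₀ σ₁ : Polynomial ℝ, IsSumSq σ₀ ∧ IsSumSq σ₁ ∧
      σ₀.natDegree ≤ d - 1 ∧ σ₁.natDegree ≤ d - 1 ∧
      ∀ y : ℝ, q.eval y = σ₀.eval y * (y - a) + σ₁.eval y * (b - y) := by
  obtain ⟨σ₀, σ₁, s0, s1, d0, d1, heq⟩ :=
    (LukacsAux.good_of hab d q (le_of_eq hdeg) hnonneg).1 hd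
  refine ⟨σ₀, σ₁, s0, s1, ?_, ?_, heq⟩
  · rcases d0 with h | h
    · simp [h]
    · omega
  · rcases d1 with h | h
    · simp [h]
    · omega
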